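/- Let k, l be positive integers, let T be a tree containing a vertex t, and let Q ⊆ V(T) with |Q| = l be a 2k-separated set in T. Then there is an ordering q₁,…,q_l of Q and subtrees T₁ ⊆ T₂ ⊆ ⋯ ⊆ T_l of T such that t, q₁ ∈ V(T₁), Q ∩ V(T_i) = {q₁,…,q_i} for each i ∈ [l], and for each 1 < i ≤ l the tree T_i is obtained from T_{i−1} by adding a bare path of length at least k: a path of length at least k with one endpoint in V(T_{i−1}), internally vertex-disjoint from T_{i−1}, whose other endpoint is q_i, where q_i is a leaf of T_i. -/

import Mathlib

open SimpleGraph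

private lemma dist_split {V : Type*} {T : SimpleGraph V} (hc : T.Connected)
    {u v x : V} (p : T.Walk u v) (hlen : p.length = T.dist u v) (hx : x ∈ p.support) :
    T.dist u x + T.dist x v = T.dist u v := by
  classical
  have h1 : T.dist u x ≤ (p.takeUntil x hx).length := SimpleGraph.dist_le _
  have h2 : T.dist x v ≤ (p.dropUntil x hx).length := SimpleGraph.dist_le _
  have h3 : (p.takeUntil x hx).length + (p.dropUntil x hx).length = p.length := by
    rw [← SimpleGraph.Walk.length_append, p.take_spec hx]
  have h4 := hc.dist_triangle (u := u) (v := x) (w := v)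
  omega

private lemma nbr_start {V : Type*} {T : SimpleGraph V} {v u : V}
    (p : T.Walk v u) (hp : p.IsPath) (hlen : 0 < p.length) :
    ∃ w, p.toSubgraph.neighborSet v = {w} := by
  cases p with
  | nil => simp at hlen
  | @cons _ w' _ h q =>
    rw [SimpleGraph.Walk.cons_isPath_iff] at hp
    refine ⟨w', Set.ext fun x => ?_⟩
    simp only [SimpleGraph.Walk.toSubgraph, SimpleGraph.Subgraph.mem_neighborSet,
      SimpleGraph.Subgraph.sup_adj, SimpleGraph.subgraphOfAdj_adj, Set.mem_singleton_iff]
    constructor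
    · rintro (h' | h')
      · exact Sym2.congr_right.mp h'.symm
      · exact absurd ((SimpleGraph.Walk.mem_verts_toSubgraph q).mp (q.toSubgraph.edge_vert h'))
          hp.2
    · rintro rfl
      exact Or.inl rfl

private lemma nbr_end {V : Type*} {T : SimpleGraph V} {u v : V}
    (p : T.Walk u v) (hp : p.IsPath) (hlen : 0 < p.length) :
    ∃ w, p.toSubgraph.neighborSet v = {w} := by
  have := nbr_start p.reverse hp.reverse (by simpa using hlen)
  rwa [SimpleGraph.Walk.toSubgraph_reverse] at this

private lemma aux_lemma {V : Type*} [Fintype V] (k : ℕ) (hk : 0 < k) (T : SimpleGraph V)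
    (hc : T.Connected) (Q : Set V)
    (hQsep : Q.Pairwise fun u v => 2 * k ≤ T.dist u v) :
    ∀ (m : ℕ) (R : Set V) (S₀ : T.Subgraph),
      R.ncard = m → R ⊆ Q → S₀.Connected →
      Q ∩ S₀.verts = Q \ R →
      (∀ q' ∈ R, ∀ x ∈ S₀.verts, k ≤ T.dist q' x) →
      ∃ (q : ℕ → V) (S : ℕ → T.Subgraph),
        S 0 = S₀ ∧
        Set.InjOn q (Set.Icc 1 m) ∧
        q '' (Set.Icc 1 m) = R ∧
        (∀ i, i + 1 ≤ m → S i ≤ S (i + 1)) ∧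
        (∀ i ≤ m, (S i).Connected) ∧
        (∀ i ≤ m, Q ∩ (S i).verts = (Q \ R) ∪ q '' (Set.Icc 1 i)) ∧
        (∀ i, 0 < i → i ≤ m →
          ∃ (u : V) (p : T.Walk u (q i)), p.IsPath ∧ k ≤ p.length ∧
            u ∈ (S (i - 1)).verts ∧
            (∀ x ∈ p.support, x ≠ u → x ∉ (S (i - 1)).verts) ∧
            S i = S (i - 1) ⊔ p.toSubgraph ∧
            ((S i).neighborSet (q i)).ncard = 1) := by
  intro m
  induction m with
  | zero =>
    intro R S₀ hcard hRQ hconn hQS hinv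
    have hR : R = ∅ := (Set.ncard_eq_zero R.toFinite).mp hcard
    obtain ⟨v₀, hv₀⟩ := hconn.nonempty
    refine ⟨fun _ => v₀, fun _ => S₀, rfl, ?_, ?_, ?_, ?_, ?_, ?_⟩
    · intro a ha; simp [Set.Icc_eq_empty (by omega : ¬ (1:ℕ) ≤ 0)] at ha
    · rw [Set.Icc_eq_empty (by omega : ¬ (1:ℕ) ≤ 0), Set.image_empty, hR]
    · intro i hi; omega
    · intro i _; exact hconn
    · intro i hi
      interval_cases i
      rw [Set.Icc_eq_empty (by omega : ¬ (1:ℕ) ≤ 0), Set.image_empty, Set.union_empty, hQS]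
    · intro i hi hi'; omega
  | succ m IH =>
    intro R S₀ hcard hRQ hconn hQS hinv
    have hRne : R.Nonempty := Set.nonempty_of_ncard_ne_zero (by omega)
    have hprod : (R ×ˢ S₀.verts).Nonempty := hRne.prod hconn.nonempty
    obtain ⟨⟨q₁, u⟩, hmem, hmin⟩ :=
      Set.exists_min_image (R ×ˢ S₀.verts) (fun z => T.dist z.1 z.2)
        (Set.toFinite _) hprod
    obtain ⟨hq₁R, huS₀⟩ := Set.mem_prod.mp hmem
    have hq₁Q : q₁ ∈ Q := hRQ hq₁R
    obtain ⟨p, hppath, hplen⟩ := hc.exists_path_of_dist u q₁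
    -- basic distance facts
    have hsplit : ∀ x ∈ p.support, T.dist u x + T.dist x q₁ = T.dist u q₁ :=
      fun x hx => dist_split hc p hplen hx
    have hklen : k ≤ p.length := by
      rw [hplen, SimpleGraph.dist_comm]
      exact hinv q₁ hq₁R u huS₀
    have hq₁S₀ : q₁ ∉ S₀.verts := by
      intro h
      have : q₁ ∈ Q \ R := by rw [← hQS]; exact ⟨hq₁Q, h⟩
      exact this.2 hq₁R
    have hune : u ≠ q₁ := fun h => hq₁S₀ (h ▸ huS₀)
    -- internal disjointness
    have hdisj : ∀ x ∈ p.support, x ≠ u → x ∉ S₀.verts := by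
      intro x hx hxu hxS₀
      have h1 := hsplit x hx
      have h2 : 0 < T.dist u x := hc.pos_dist_of_ne (fun h => hxu h.symm)
      have h3 := hmin (q₁, x) (Set.mem_prod.mpr ⟨hq₁R, hxS₀⟩)
      simp only at h3
      have h4 : T.dist q₁ x = T.dist x q₁ := SimpleGraph.dist_comm ..
      have h5 : T.dist q₁ u = T.dist u q₁ := SimpleGraph.dist_comm ..
      omega
    -- Q-vertices on the path
    have hsuppQ : ∀ x ∈ p.support, x ∈ Q → x = q₁ ∨ x ∈ S₀.verts := by
      intro x hx hxQ
      by_contra hcon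
      push_neg at hcon
      have hxR : x ∈ R := by
        by_contra hxR
        have : x ∈ Q ∩ S₀.verts := by rw [hQS]; exact ⟨hxQ, hxR⟩
        exact hcon.2 this.2
      have h1 := hsplit x hx
      have h2 : 0 < T.dist x q₁ := hc.pos_dist_of_ne hcon.1
      have h3 := hmin (x, u) (Set.mem_prod.mpr ⟨hxR, huS₀⟩)
      simp only at h3
      have h4 : T.dist x u = T.dist u x := SimpleGraph.dist_comm ..
      have h5 : T.dist q₁ u = T.dist u q₁ := SimpleGraph.dist_comm ..
      omega
    set P : T.Subgraph := p.toSubgraph with hP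
    set S₁ : T.Subgraph := S₀ ⊔ P with hS₁
    set R' : Set V := R \ {q₁} with hR'
    have hq₁P : q₁ ∈ P.verts := p.end_mem_verts_toSubgraph
    have hS₁verts : S₁.verts = S₀.verts ∪ P.verts := rfl
    have hS₁conn : S₁.Connected := by
      refine SimpleGraph.Subgraph.connected_sup hconn.preconnected p.toSubgraph_connected.preconnected ⟨u, ?_⟩
      exact ⟨huS₀, p.start_mem_verts_toSubgraph⟩
    have hQS₁ : Q ∩ S₁.verts = Q \ R' := by
      ext x
      simp only [hS₁verts, Set.mem_inter_iff, Set.mem_union, hR', Set.mem_diff,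
        Set.mem_singleton_iff]
      constructor
      · rintro ⟨hxQ, hx | hx⟩
        · have : x ∈ Q \ R := by rw [← hQS]; exact ⟨hxQ, hx⟩
          exact ⟨hxQ, fun h => this.2 h.1⟩
        · rcases hsuppQ x ((SimpleGraph.Walk.mem_verts_toSubgraph p).mp hx) hxQ with rfl | hx'
          · exact ⟨hxQ, fun h => h.2 rfl⟩
          · have : x ∈ Q \ R := by rw [← hQS]; exact ⟨hxQ, hx'⟩
            exact ⟨hxQ, fun h => this.2 h.1⟩
      · rintro ⟨hxQ, hx⟩
        by_cases hxq : x = q₁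
        · exact ⟨hxQ, Or.inr (hxq ▸ hq₁P)⟩
        · have hxR : x ∉ R := fun h => hx ⟨h, hxq⟩
          have hmem : x ∈ Q ∩ S₀.verts := by rw [hQS]; exact ⟨hxQ, hxR⟩
          exact ⟨hxQ, Or.inl hmem.2⟩
    have hinv' : ∀ q' ∈ R', ∀ x ∈ S₁.verts, k ≤ T.dist q' x := by
      rintro q' ⟨hq'R, hq'ne⟩ x hx
      rcases hx with hx | hx
      · exact hinv q' hq'R x hx
      · have hxsupp := (SimpleGraph.Walk.mem_verts_toSubgraph p).mp hx
        have h1 := hsplit x hxsupp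
        have hsep : 2 * k ≤ T.dist q' q₁ :=
          hQsep (hRQ hq'R) hq₁Q (by simpa using hq'ne)
        have h2 := hmin (q', u) (Set.mem_prod.mpr ⟨hq'R, huS₀⟩)
        simp only at h2
        have h3 := hc.dist_triangle (u := q') (v := x) (w := u)
        have h4 := hc.dist_triangle (u := q') (v := x) (w := q₁)
        have h5 : T.dist q₁ u = T.dist u q₁ := SimpleGraph.dist_comm ..
        have h6 : T.dist x u = T.dist u x := SimpleGraph.dist_comm ..
        omega
    have hR'card : R'.ncard = m := by
      have hins : insert q₁ R' = R := by
        rw [hR', Set.insert_diff_singleton, Set.insert_eq_self.mpr hq₁R]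
      have h2 : (insert q₁ R').ncard = R'.ncard + 1 :=
        Set.ncard_insert_of_notMem (by simp [hR']) R'.toFinite
      rw [hins] at h2
      omega
    obtain ⟨q', S', hS'0, hinj', himg', hmono', hconn', hQS', hbare'⟩ :=
      IH R' S₁ hR'card (fun x hx => hRQ hx.1) hS₁conn hQS₁ hinv'
    have hmemR' : ∀ j, 1 ≤ j → j ≤ m → q' j ∈ R' := by
      intro j h1 h2
      rw [← himg']
      exact ⟨j, ⟨h1, h2⟩, rfl⟩
    refine ⟨fun i => if i ≤ 1 then q₁ else q' (i - 1),
            fun i => if i = 0 then S₀ else S' (i - 1), rfl, ?_, ?_, ?_, ?_, ?_, ?_⟩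
    · -- injectivity
      rintro a ⟨ha1, ha2⟩ b ⟨hb1, hb2⟩ hab
      simp only at hab
      by_cases ha : a ≤ 1 <;> by_cases hb : b ≤ 1
      · omega
      · rw [if_pos ha, if_neg hb] at hab
        exact absurd (hab ▸ hmemR' (b-1) (by omega) (by omega)).2 (by simp)
      · rw [if_neg ha, if_pos hb] at hab
        exact absurd (hab.symm ▸ hmemR' (a-1) (by omega) (by omega)).2 (by simp)
      · rw [if_neg ha, if_neg hb] at hab
        have := hinj' ⟨(by omega : 1 ≤ a - 1), by omega⟩ ⟨(by omega : 1 ≤ b - 1), by omega⟩ hab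
        omega
    · -- image
      apply Set.Subset.antisymm
      · rintro y ⟨i, ⟨hi1, hi2⟩, rfl⟩
        simp only
        split_ifs with h
        · exact hq₁R
        · exact (hmemR' (i-1) (by omega) (by omega)).1
      · intro y hy
        by_cases hyq : y = q₁
        · exact ⟨1, ⟨le_refl 1, by omega⟩, by simp [hyq]⟩
        · have : y ∈ R' := ⟨hy, hyq⟩
          rw [← himg'] at this
          obtain ⟨j, ⟨hj1, hj2⟩, rfl⟩ := this
          exact ⟨j + 1, ⟨by omega, by omega⟩, by
            simp only [if_neg (by omega : ¬ j + 1 ≤ 1), Nat.add_sub_cancel]⟩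
    · -- monotone
      intro i hi
      by_cases h : i = 0
      · subst h
        simp only [if_pos rfl, if_neg (by omega : ¬ (0:ℕ) + 1 = 0), Nat.add_sub_cancel, hS'0]
        exact le_sup_left
      · simp only [if_neg h, if_neg (by omega : ¬ i + 1 = 0), Nat.add_sub_cancel]
        have h2 := hmono' (i - 1) (by omega)
        rwa [show i - 1 + 1 = i by omega] at h2
    · -- connected
      intro i hi
      by_cases h : i = 0
      · simpa [h] using hconn
      · simp only [if_neg h]
        exact hconn' (i - 1) (by omega)
    · -- Q ∩ verts
      intro i hi
      by_cases h : i = 0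
      · subst h
        simp only [if_pos rfl, Set.Icc_eq_empty (by omega : ¬ (1:ℕ) ≤ 0), Set.image_empty,
          Set.union_empty]
        exact hQS
      · simp only [if_neg h]
        have hkey := hQS' (i - 1) (by omega)
        have himg2 : (fun i => if i ≤ 1 then q₁ else q' (i - 1)) '' Set.Icc 1 i
            = insert q₁ (q' '' Set.Icc 1 (i - 1)) := by
          apply Set.Subset.antisymm
          · rintro y ⟨j, ⟨hj1, hj2⟩, rfl⟩
            simp only
            split_ifs with hj
            · exact Set.mem_insert _ _
            · exact Set.mem_insert_of_mem _ ⟨j - 1, ⟨by omega, by omega⟩, rfl⟩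
          · rintro y (rfl | ⟨j, ⟨hj1, hj2⟩, rfl⟩)
            · exact ⟨1, ⟨le_refl 1, by omega⟩, by simp⟩
            · exact ⟨j + 1, ⟨by omega, by omega⟩, by
                simp only [if_neg (by omega : ¬ j + 1 ≤ 1), Nat.add_sub_cancel]⟩
        rw [himg2, hkey]
        have hQR' : Q \ R' = insert q₁ (Q \ R) := by
          ext y
          simp only [hR', Set.mem_diff, Set.mem_singleton_iff, Set.mem_insert_iff]
          constructor
          · rintro ⟨hyQ, hy⟩
            by_cases hyR : y ∈ R
            · left; by_contra hne; exact hy ⟨hyR, hne⟩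
            · right; exact ⟨hyQ, hyR⟩
          · rintro (rfl | ⟨hyQ, hyR⟩)
            · exact ⟨hq₁Q, fun hh => hh.2 rfl⟩
            · exact ⟨hyQ, fun hh => hyR hh.1⟩
        rw [hQR']
        ext y
        simp only [Set.mem_union, Set.mem_insert_iff]
        tauto
    · -- bare paths
      intro i hi1 hi2
      by_cases h : i = 1
      · subst h
        refine ⟨u, by simpa using p, by simpa using hppath, by simpa using hklen, huS₀, ?_, ?_, ?_⟩
        · intro x hx hxu
          simp only [if_pos rfl]
          exact hdisj x (by simpa using hx) hxu
        · simp only [if_neg (by omega : ¬ (1:ℕ) = 0), if_pos rfl, hS'0]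
          rfl
        · simp only [if_neg (by omega : ¬ (1:ℕ) = 0)]
          have hq₁nbr : (S₁.neighborSet q₁).ncard = 1 := by
            obtain ⟨w, hw⟩ := nbr_end p hppath (by omega)
            have : S₁.neighborSet q₁ = {w} := by
              rw [hS₁, SimpleGraph.Subgraph.neighborSet_sup]
              have hempty : S₀.neighborSet q₁ = ∅ := by
                ext z
                simp only [SimpleGraph.Subgraph.mem_neighborSet, Set.mem_empty_iff_false,
                  iff_false]
                intro hadj
                exact hq₁S₀ (S₀.edge_vert hadj)
              rw [hempty, Set.empty_union, hP, hw]
            rw [this, Set.ncard_singleton]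
          simpa [hS'0] using hq₁nbr
      · have hbare := hbare' (i - 1) (by omega) (by omega)
        beta_reduce
        rw [if_neg (show ¬ i ≤ 1 by omega)]
        obtain ⟨u', p', hp'path, hp'len, hu', hdisj'', heq'', hnbr''⟩ := hbare
        refine ⟨u', p', hp'path, hp'len, ?_, ?_, ?_, ?_⟩
        · simp only [if_neg (show ¬ i - 1 = 0 by omega)]
          exact hu'
        · intro x hx hxu
          simp only [if_neg (by omega : ¬ i - 1 = 0)]
          exact hdisj'' x hx hxu
        · simp only [if_neg (show ¬ i = 0 by omega), if_neg (show ¬ i - 1 = 0 by omega)]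
          exact heq''
        · simp only [if_neg (show ¬ i = 0 by omega)]
          exact hnbr''

theorem statement_4 {V : Type*} [Fintype V] (k l : ℕ) (hk : 0 < k) (hl : 0 < l)
    (T : SimpleGraph V) (hT : T.IsTree) (t : V)
    (Q : Set V) (hQcard : Q.ncard = l)
    (hQsep : Q.Pairwise fun u v => 2 * k ≤ T.dist u v) :
    ∃ (q : ℕ → V) (S : ℕ → T.Subgraph),
      Set.InjOn q (Set.Iio l) ∧
      q '' (Set.Iio l) = Q ∧
      (∀ i, i + 1 < l → S i ≤ S (i + 1)) ∧
      (∀ i < l, (S i).Connected) ∧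
      t ∈ (S 0).verts ∧ q 0 ∈ (S 0).verts ∧
      (∀ i < l, Q ∩ (S i).verts = q '' (Set.Iic i)) ∧
      (∀ i, 0 < i → i < l →
        ∃ (u : V) (p : T.Walk u (q i)),
          p.IsPath ∧ k ≤ p.length ∧
          u ∈ (S (i - 1)).verts ∧
          (∀ x ∈ p.support, x ≠ u → x ∉ (S (i - 1)).verts) ∧
          S i = S (i - 1) ⊔ p.toSubgraph ∧
          ((S i).neighborSet (q i)).ncard = 1) := by
  classical
  have hc : T.Connected := hT.isConnected
  have hQne : Q.Nonempty := Set.nonempty_of_ncard_ne_zero (by omega)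
  obtain ⟨q₀, hq₀Q, hq₀min⟩ := Set.exists_min_image Q (fun x => T.dist t x) Q.toFinite hQne
  obtain ⟨p₀, hp₀path, hp₀len⟩ := hc.exists_path_of_dist t q₀
  set S₀ : T.Subgraph := p₀.toSubgraph with hS₀
  set R : Set V := Q \ {q₀} with hR
  have hsplit : ∀ x ∈ p₀.support, T.dist t x + T.dist x q₀ = T.dist t q₀ :=
    fun x hx => dist_split hc p₀ hp₀len hx
  have hsuppQ : ∀ x ∈ p₀.support, x ∈ Q → x = q₀ := by
    intro x hx hxQ
    by_contra hne
    have h1 := hsplit x hx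
    have h2 : 0 < T.dist x q₀ := hc.pos_dist_of_ne hne
    have h3 := hq₀min x hxQ
    have h4 : T.dist t x ≤ (p₀.takeUntil x hx).length := SimpleGraph.dist_le _
    omega
  have hQS₀ : Q ∩ S₀.verts = Q \ R := by
    ext x
    simp only [hR, Set.mem_inter_iff, Set.mem_diff, Set.mem_singleton_iff]
    constructor
    · rintro ⟨hxQ, hx⟩
      refine ⟨hxQ, fun hh => ?_⟩
      exact hh.2 (hsuppQ x ((SimpleGraph.Walk.mem_verts_toSubgraph p₀).mp hx) hxQ)
    · rintro ⟨hxQ, hx⟩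
      have : x = q₀ := by by_contra hne; exact hx ⟨hxQ, hne⟩
      exact ⟨hxQ, this ▸ p₀.end_mem_verts_toSubgraph⟩
  have hinv : ∀ q' ∈ R, ∀ x ∈ S₀.verts, k ≤ T.dist q' x := by
    rintro q' ⟨hq'Q, hq'ne⟩ x hx
    have hxsupp := (SimpleGraph.Walk.mem_verts_toSubgraph p₀).mp hx
    have h1 := hsplit x hxsupp
    have hsep : 2 * k ≤ T.dist q' q₀ := hQsep hq'Q hq₀Q (by simpa using hq'ne)
    have h2 := hq₀min q' hq'Q
    have h3 := hc.dist_triangle (u := t) (v := x) (w := q')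
    have h4 := hc.dist_triangle (u := q') (v := x) (w := q₀)
    have h5 : T.dist x q' = T.dist q' x := SimpleGraph.dist_comm ..
    omega
  have hRcard : R.ncard = l - 1 := by
    rw [hR, Set.ncard_diff_singleton_of_mem hq₀Q, hQcard]
  obtain ⟨q', S', hS'0, hinj', himg', hmono', hconn', hQS', hbare'⟩ :=
    aux_lemma k hk T hc Q hQsep (l - 1) R S₀ hRcard (fun x hx => hx.1)
      p₀.toSubgraph_connected hQS₀ hinv
  have hmemR : ∀ j, 1 ≤ j → j ≤ l - 1 → q' j ∈ R := by
    intro j h1 h2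
    rw [← himg']
    exact ⟨j, ⟨h1, h2⟩, rfl⟩
  refine ⟨fun i => if i = 0 then q₀ else q' i, S', ?_, ?_, ?_, ?_, ?_, ?_, ?_, ?_⟩
  · rintro a ha b hb hab
    simp only [Set.mem_Iio] at ha hb
    simp only at hab
    by_cases h1 : a = 0 <;> by_cases h2 : b = 0
    · omega
    · rw [if_pos h1, if_neg h2] at hab
      exact ((hmemR b (by omega) (by omega)).2 (Set.mem_singleton_iff.mpr hab.symm)).elim
    · rw [if_neg h1, if_pos h2] at hab
      exact ((hmemR a (by omega) (by omega)).2 (Set.mem_singleton_iff.mpr hab)).elim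
    · rw [if_neg h1, if_neg h2] at hab
      exact hinj' ⟨by omega, by omega⟩ ⟨by omega, by omega⟩ hab
  · apply Set.Subset.antisymm
    · rintro y ⟨i, hi, rfl⟩
      simp only [Set.mem_Iio] at hi
      simp only
      split_ifs with h
      · exact hq₀Q
      · exact (hmemR i (by omega) (by omega)).1
    · intro y hy
      by_cases hyq : y = q₀
      · exact ⟨0, by simpa using hl, by simp [hyq]⟩
      · have : y ∈ R := ⟨hy, hyq⟩
        rw [← himg'] at this
        obtain ⟨j, ⟨hj1, hj2⟩, rfl⟩ := this
        exact ⟨j, by simp only [Set.mem_Iio]; omega, by simp [if_neg (by omega : ¬ j = 0)]⟩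
  · intro i hi
    exact hmono' i (by omega)
  · intro i hi
    exact hconn' i (by omega)
  · rw [hS'0]
    exact p₀.start_mem_verts_toSubgraph
  · rw [hS'0]
    simp only [if_pos rfl]
    exact p₀.end_mem_verts_toSubgraph
  · intro i hi
    have hkey := hQS' i (by omega)
    have hQR : Q \ R = {q₀} := by
      ext y
      simp only [hR, Set.mem_diff, Set.mem_singleton_iff]
      constructor
      · rintro ⟨hyQ, hy⟩
        by_contra hne
        exact hy ⟨hyQ, hne⟩
      · rintro rfl
        exact ⟨hq₀Q, fun hh => hh.2 rfl⟩
    have himg2 : (fun i => if i = 0 then q₀ else q' i) '' Set.Iic i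
        = insert q₀ (q' '' Set.Icc 1 i) := by
      apply Set.Subset.antisymm
      · rintro y ⟨j, hj, rfl⟩
        simp only [Set.mem_Iic] at hj
        simp only
        split_ifs with h
        · exact Set.mem_insert _ _
        · exact Set.mem_insert_of_mem _ ⟨j, ⟨by omega, hj⟩, rfl⟩
      · rintro y (rfl | ⟨j, ⟨hj1, hj2⟩, rfl⟩)
        · exact ⟨0, by simp, by simp⟩
        · exact ⟨j, by simpa using hj2, by simp [if_neg (by omega : ¬ j = 0)]⟩
    rw [hkey, hQR, himg2, Set.singleton_union]
  · intro i hi1 hi2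
    beta_reduce
    rw [if_neg (show ¬ i = 0 by omega)]
    exact hbare' i hi1 (by omega)
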